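/- Let L > 2 be an integer, A ∈ ℝ^{M×N}, y ∈ ℝ^M, ε > 0, and let Q₊ := min_{z ∈ S₊} ‖z‖₁. Let 0 < α ≤ (2ε/(L(Q₊ + N + ε)))^{1/(L−2)}. Suppose x : [0,∞) → ℝ^N is differentiable, satisfies the reduced gradient flow x'(t) = −[Aᵀ(A x(t)^{⊙L} − y)] ⊙ x(t)^{⊙(L−1)} for all t ≥ 0, has x(0) = α·𝟙 (all entries equal to α), and the limit x̃∞ := lim_{t→∞} x(t)^{⊙L} exists. Then ‖x̃∞‖₁ − min_{z ∈ S₊} ‖z‖₁ ≤ ε. -/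

import Mathlib

open Filter Topology Matrix

noncomputable section

/-- The NNLS solution set `S₊ = argmin_{z ≥ 0} ‖Az − y‖₂²`. -/
def nnlsSet {M N : ℕ} (A : Matrix (Fin M) (Fin N) ℝ) (y : Fin M → ℝ) :
    Set (Fin N → ℝ) :=
  {z | (∀ i, 0 ≤ z i) ∧ ∀ w : Fin N → ℝ, (∀ i, 0 ≤ w i) →
    ∑ j, (A.mulVec z j - y j) ^ 2 ≤ ∑ j, (A.mulVec w j - y j) ^ 2}

/-- The reduced gradient flow `x'(t) = −[Aᵀ(A x(t)^{⊙L} − y)] ⊙ x(t)^{⊙(L−1)}` for `t ≥ 0`. -/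
def GradFlow {M N : ℕ} (A : Matrix (Fin M) (Fin N) ℝ) (y : Fin M → ℝ) (L : ℕ)
    (x : ℝ → Fin N → ℝ) : Prop :=
  ∀ t : ℝ, 0 ≤ t → ∀ i : Fin N,
    HasDerivAt (fun s => x s i)
      (-(Matrix.mulVec Aᵀ (A.mulVec (fun j => x t j ^ L) - y) i * x t i ^ (L - 1))) t

/-- Derivative of the inverse `(L-2)`-th power along the flow of one coordinate. -/
private lemma inv_pow_hasDerivAt {K : ℕ} {f : ℝ → ℝ} {G t : ℝ}
    (hf : HasDerivAt f (-(G * f t ^ (K + 2))) t) (hft : f t ≠ 0) :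
    HasDerivAt (fun s => (f s ^ (K + 1))⁻¹) ((K + 1) * G) t := by
  have h1 : HasDerivAt (fun s => f s ^ (K + 1))
      (((K + 1 : ℕ) : ℝ) * f t ^ K * (-(G * f t ^ (K + 2)))) t := by
    simpa using hf.fun_pow (K + 1)
  have h2 := h1.fun_inv (pow_ne_zero _ hft)
  refine h2.congr_deriv ?_
  field_simp
  push_cast
  ring

/-- Positivity of each coordinate along the flow. -/
private lemma flow_pos {K : ℕ} {f G : ℝ → ℝ}
    (hf : ∀ t, 0 ≤ t → HasDerivAt f (-(G t * f t ^ (K + 2))) t)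
    (hG : ∀ t, 0 ≤ t → ContinuousAt G t)
    (h0 : 0 < f 0) : ∀ t, 0 ≤ t → 0 < f t := by
  intro T hT
  by_contra hcon
  push_neg at hcon
  set S : Set ℝ := {t | t ∈ Set.Icc (0:ℝ) T ∧ f t ≤ 0} with hS
  have hSne : S.Nonempty := ⟨T, ⟨hT, le_rfl⟩, hcon⟩
  have hSbd : BddBelow S := ⟨0, fun s hs => hs.1.1⟩
  set t₀ := sInf S with ht₀
  have ht₀0 : 0 ≤ t₀ := le_csInf hSne fun s hs => hs.1.1
  have ht₀T : t₀ ≤ T := csInf_le hSbd ⟨⟨hT, le_rfl⟩, hcon⟩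
  have hmem : f t₀ ≤ 0 := by
    obtain ⟨s, _, hstend, hsmem⟩ := exists_seq_tendsto_sInf hSne hSbd
    have hcont : Tendsto (fun n => f (s n)) atTop (𝓝 (f t₀)) :=
      ((hf t₀ ht₀0).continuousAt.tendsto).comp hstend
    exact le_of_tendsto hcont (Eventually.of_forall fun n => (hsmem n).2)
  have ht₀pos : 0 < t₀ := by
    rcases ht₀0.lt_or_eq with h | h
    · exact h
    · exfalso; rw [← h] at hmem; linarith
  have hpre : ∀ s, s ∈ Set.Ico (0:ℝ) t₀ → 0 < f s := by
    intro s hs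
    by_contra hns; push_neg at hns
    have : s ∈ S := ⟨⟨hs.1, hs.2.le.trans ht₀T⟩, hns⟩
    exact absurd (csInf_le hSbd this) (not_le.2 hs.2)
  obtain ⟨C, hC⟩ : ∃ C, ∀ s ∈ Set.Icc (0:ℝ) t₀, |G s| ≤ C := by
    obtain ⟨C, hC⟩ := (isCompact_Icc (a := (0:ℝ)) (b := t₀)).exists_bound_of_continuousOn
      (fun s hs => (hG s hs.1).continuousWithinAt)
    exact ⟨C, fun s hs => by simpa using hC s hs⟩
  have hC0 : 0 ≤ C := le_trans (abs_nonneg _) (hC 0 ⟨le_rfl, ht₀0⟩)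
  set D := (f 0 ^ (K+1))⁻¹ + (K+1) * C * t₀ with hD
  have hDpos : 0 < D := by
    have h1 : 0 < (f 0 ^ (K+1))⁻¹ := by positivity
    have h2 : 0 ≤ ((K:ℝ)+1) * C * t₀ := by positivity
    rw [hD]; push_cast; linarith
  have hbound : ∀ s ∈ Set.Ico (0:ℝ) t₀, D⁻¹ ≤ f s ^ (K+1) := by
    intro s hs
    have hlem := norm_image_sub_le_of_norm_deriv_le_segment'
      (f := fun r => (f r ^ (K+1))⁻¹) (f' := fun r => ((K:ℝ)+1) * G r)
      (a := 0) (b := s) (C := ((K:ℝ)+1) * C)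
      (fun r hr => by
        have hr0 : 0 < f r := hpre r ⟨hr.1, lt_of_le_of_lt hr.2 hs.2⟩
        have := inv_pow_hasDerivAt (hf r hr.1) hr0.ne'
        push_cast at this
        exact this.hasDerivWithinAt)
      (fun r hr => by
        have hrC : |G r| ≤ C := hC r ⟨hr.1, (hr.2.le.trans hs.2.le)⟩
        have hK : (0:ℝ) ≤ (K:ℝ)+1 := by positivity
        rw [Real.norm_eq_abs, abs_mul, abs_of_nonneg hK]
        exact mul_le_mul_of_nonneg_left hrC hK)
      s (Set.right_mem_Icc.2 hs.1)
    have h1 : (f s ^ (K+1))⁻¹ ≤ D := by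
      have h2 := (abs_le.1 hlem).2
      have hst : s - 0 ≤ t₀ := by linarith [hs.2]
      have hKC : 0 ≤ ((K:ℝ)+1) * C := by positivity
      have h3 : ((K:ℝ)+1) * C * (s - 0) ≤ ((K:ℝ)+1) * C * t₀ :=
        mul_le_mul_of_nonneg_left hst hKC
      rw [hD]; push_cast
      linarith
    have h2 : 0 < f s ^ (K+1) := pow_pos (hpre s hs) _
    have h3 := inv_anti₀ (by positivity) h1
    rwa [inv_inv] at h3
  have hftend : Tendsto (fun s => f s ^ (K+1)) (𝓝[<] t₀) (𝓝 (f t₀ ^ (K+1))) :=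
    (((hf t₀ ht₀0).continuousAt.pow (K+1)).tendsto).mono_left nhdsWithin_le_nhds
  have hev : ∀ᶠ s in 𝓝[<] t₀, D⁻¹ ≤ f s ^ (K+1) := by
    filter_upwards [Ioo_mem_nhdsLT_of_mem (Set.mem_Ioc.2 ⟨ht₀pos, le_rfl⟩)] with s hs
    exact hbound s ⟨hs.1.le, hs.2⟩
  have hlim0 : D⁻¹ ≤ f t₀ ^ (K+1) := ge_of_tendsto hftend hev
  have hft0 : 0 ≤ f t₀ := by
    have htnd : Tendsto f (𝓝[<] t₀) (𝓝 (f t₀)) :=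
      ((hf t₀ ht₀0).continuousAt.tendsto).mono_left nhdsWithin_le_nhds
    refine ge_of_tendsto htnd ?_
    filter_upwards [Ioo_mem_nhdsLT_of_mem (Set.mem_Ioc.2 ⟨ht₀pos, le_rfl⟩)] with s hs
    exact (hpre s ⟨hs.1.le, hs.2⟩).le
  have hf0 : f t₀ = 0 := le_antisymm hmem hft0
  rw [hf0, zero_pow (by omega)] at hlim0
  exact absurd hlim0 (by positivity : (0:ℝ) < D⁻¹).not_ge

/-- If a function converges and its derivative converges, the derivative limit is zero. -/
private lemma deriv_limit_zero {f f' : ℝ → ℝ} {c v : ℝ}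
    (hf : ∀ t, 0 ≤ t → HasDerivAt f (f' t) t)
    (hfc : Tendsto f atTop (𝓝 c)) (hfv : Tendsto f' atTop (𝓝 v)) : v = 0 := by
  by_contra hv
  have hv2 : 0 < |v| / 2 := by positivity
  have h1 : ∀ᶠ t in atTop, |f' t - v| ≤ |v| / 2 := by
    have := Metric.tendsto_nhds.1 hfv (|v|/2) hv2
    filter_upwards [this] with t ht
    rw [Real.dist_eq] at ht; exact ht.le
  have h2 : ∀ᶠ t in atTop, |f t - c| ≤ 1 := by
    have := Metric.tendsto_nhds.1 hfc 1 one_pos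
    filter_upwards [this] with t ht
    rw [Real.dist_eq] at ht; exact ht.le
  obtain ⟨t₁, ht₁⟩ := (((h1.and h2).and (eventually_ge_atTop (0:ℝ))).and
    (eventually_ge_atTop (0:ℝ))).exists_forall_of_atTop
  have ht₁0 : 0 ≤ t₁ := (ht₁ t₁ le_rfl).2
  have key : ∀ T, t₁ ≤ T → |v| / 2 * (T - t₁) ≤ 1 + |c - f t₁| := by
    intro T hT
    have hlem := norm_image_sub_le_of_norm_deriv_le_segment'
      (f := fun s => f s - s * v) (f' := fun s => f' s - v)
      (a := t₁) (b := T) (C := |v|/2)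
      (fun r hr => (((hf r (ht₁0.trans hr.1)).sub (hasDerivAt_mul_const v))).hasDerivWithinAt)
      (fun r hr => by rw [Real.norm_eq_abs]; exact ((ht₁ r hr.1).1).1.1)
      T (Set.right_mem_Icc.2 hT)
    rw [Real.norm_eq_abs] at hlem
    have e1 : f T - T * v - (f t₁ - t₁ * v) = (f T - f t₁) - (T - t₁) * v := by ring
    rw [e1] at hlem
    have h3 : |(T - t₁) * v| ≤ |(f T - f t₁) - (T - t₁) * v| + |f T - f t₁| := by
      have := abs_sub ((T - t₁) * v) (f T - f t₁)
      calc |(T - t₁) * v| = |((T - t₁) * v - (f T - f t₁)) + (f T - f t₁)| := by ring_nf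
        _ ≤ |(T - t₁) * v - (f T - f t₁)| + |f T - f t₁| := abs_add_le _ _
        _ = |(f T - f t₁) - (T - t₁) * v| + |f T - f t₁| := by rw [abs_sub_comm]
    have h4 : |f T - f t₁| ≤ 1 + |c - f t₁| := by
      calc |f T - f t₁| ≤ |f T - c| + |c - f t₁| := abs_sub_le _ _ _
        _ ≤ 1 + |c - f t₁| := by linarith [((ht₁ T hT).1).1.2]
    have h5 : |(T - t₁) * v| = (T - t₁) * |v| := by
      rw [abs_mul, abs_of_nonneg (by linarith : (0:ℝ) ≤ T - t₁)]
    nlinarith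
  set T := t₁ + (2 * (2 + |c - f t₁|)) / |v| with hT
  have hTge : t₁ ≤ T := by
    have h : 0 ≤ (2 * (2 + |c - f t₁|)) / |v| := by positivity
    rw [hT]
    exact le_add_of_nonneg_right h
  have := key T hTge
  have hTv : |v| / 2 * (T - t₁) = 2 + |c - f t₁| := by
    rw [hT]; field_simp; ring
  rw [hTv] at this
  linarith

set_option maxHeartbeats 1000000 in
theorem stmt3 {M N : ℕ} (L : ℕ) (hL : 2 < L)
    (A : Matrix (Fin M) (Fin N) ℝ) (y : Fin M → ℝ)
    (ε : ℝ) (hε : 0 < ε)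
    (Qp : ℝ) (hQ : IsLeast ((fun z => ∑ i, |z i|) '' nnlsSet A y) Qp)
    (α : ℝ) (hα0 : 0 < α)
    (hα : α ≤ (2 * ε / (L * (Qp + N + ε))) ^ ((1 : ℝ) / ((L : ℝ) - 2)))
    (x : ℝ → Fin N → ℝ) (hinit : x 0 = fun _ => α)
    (hflow : GradFlow A y L x)
    (xinf : Fin N → ℝ)
    (hlim : Tendsto (fun t => fun i => x t i ^ L) atTop (𝓝 xinf)) :
    (∑ i, |xinf i|) - Qp ≤ ε := by
  obtain ⟨K, rfl⟩ : ∃ K, L = K + 3 := ⟨L - 3, by omega⟩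
  obtain ⟨z, hz, hzQ⟩ := hQ.1
  -- the gradient field
  set g : Fin N → ℝ → ℝ :=
    fun i t => Aᵀ.mulVec (A.mulVec (fun j => x t j ^ (K + 3)) - y) i with hgdef
  have hflow' : ∀ i, ∀ t, 0 ≤ t →
      HasDerivAt (fun s => x s i) (-(g i t * x t i ^ (K + 2))) t := by
    intro i t ht
    have h := hflow t ht i
    have e : K + 3 - 1 = K + 2 := by omega
    rw [e] at h
    exact h
  have hxc : ∀ i t, 0 ≤ t → ContinuousAt (fun s => x s i) t :=
    fun i t ht => (hflow' i t ht).continuousAt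
  have hgc : ∀ i t, 0 ≤ t → ContinuousAt (g i) t := by
    intro i t ht
    have hxk : ∀ k : Fin N, Tendsto (fun s => x s k ^ (K + 3)) (𝓝 t)
        (𝓝 (x t k ^ (K + 3))) := fun k => ((hxc k t ht).pow (K + 3)).tendsto
    have h1 : ∀ j, Tendsto (fun s => ∑ k, A j k * x s k ^ (K + 3)) (𝓝 t)
        (𝓝 (∑ k, A j k * x t k ^ (K + 3))) :=
      fun j => tendsto_finset_sum _ (fun k _ => tendsto_const_nhds.mul (hxk k))
    have h2 : Tendsto (fun s => ∑ j, Aᵀ i j * ((∑ k, A j k * x s k ^ (K + 3)) - y j)) (𝓝 t)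
        (𝓝 (∑ j, Aᵀ i j * ((∑ k, A j k * x t k ^ (K + 3)) - y j))) :=
      tendsto_finset_sum _ (fun j _ => tendsto_const_nhds.mul ((h1 j).sub tendsto_const_nhds))
    have e : ∀ s, g i s = ∑ j, Aᵀ i j * ((∑ k, A j k * x s k ^ (K + 3)) - y j) := by
      intro s; simp [hgdef, Matrix.mulVec, dotProduct]
    unfold ContinuousAt
    rw [e t]
    exact h2.congr (fun s => (e s).symm)
  -- positivity
  have hpos : ∀ i t, 0 ≤ t → 0 < x t i := by
    intro i
    have h0 : 0 < x 0 i := by rw [hinit]; exact hα0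
    exact flow_pos (hflow' i) (hgc i) h0
  -- per-coordinate limits
  have hulim : ∀ i, Tendsto (fun t => x t i ^ (K + 3)) atTop (𝓝 (xinf i)) := by
    intro i
    have h := tendsto_pi_nhds.1 hlim i
    exact h
  have hxinf0 : ∀ i, 0 ≤ xinf i := fun i =>
    ge_of_tendsto (hulim i)
      ((eventually_ge_atTop 0).mono fun t ht => (pow_pos (hpos i t ht) _).le)
  set ξ : Fin N → ℝ := fun i => (xinf i) ^ ((K + 3 : ℝ))⁻¹ with hξdef
  have hξ0 : ∀ i, 0 ≤ ξ i := fun i => Real.rpow_nonneg (hxinf0 i) _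
  have hξpow : ∀ i, ξ i ^ (K + 3) = xinf i := by
    intro i
    rw [hξdef]
    rw [← Real.rpow_natCast ((xinf i) ^ ((K + 3 : ℝ))⁻¹) (K + 3),
      ← Real.rpow_mul (hxinf0 i)]
    rw [show ((K + 3 : ℝ))⁻¹ * ((K + 3 : ℕ) : ℝ) = 1 by push_cast; field_simp]
    exact Real.rpow_one _
  have hxlim : ∀ i, Tendsto (fun t => x t i) atTop (𝓝 (ξ i)) := by
    intro i
    have hcont : ContinuousAt (fun a : ℝ => a ^ ((K + 3 : ℝ))⁻¹) (xinf i) :=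
      Real.continuousAt_rpow_const _ _ (Or.inr (by positivity))
    have h := hcont.tendsto.comp (hulim i)
    apply h.congr'
    filter_upwards [eventually_ge_atTop (0:ℝ)] with t ht
    show (x t i ^ (K + 3) : ℝ) ^ ((K + 3 : ℝ))⁻¹ = x t i
    rw [← Real.rpow_natCast (x t i) (K + 3), ← Real.rpow_mul (hpos i t ht).le]
    rw [show ((K + 3 : ℕ) : ℝ) * ((K + 3 : ℝ))⁻¹ = 1 by push_cast; field_simp]
    exact Real.rpow_one _
  set ginf : Fin N → ℝ := fun i => Aᵀ.mulVec (A.mulVec xinf - y) i with hginfdef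
  have hglim : ∀ i, Tendsto (fun t => g i t) atTop (𝓝 (ginf i)) := by
    intro i
    have h1 : ∀ j, Tendsto (fun t => ∑ k, A j k * x t k ^ (K + 3)) atTop
        (𝓝 (∑ k, A j k * xinf k)) :=
      fun j => tendsto_finset_sum _ (fun k _ => tendsto_const_nhds.mul (hulim k))
    have h2 : Tendsto (fun t => ∑ j, Aᵀ i j * ((∑ k, A j k * x t k ^ (K + 3)) - y j)) atTop
        (𝓝 (∑ j, Aᵀ i j * ((∑ k, A j k * xinf k) - y j))) :=
      tendsto_finset_sum _ (fun j _ => tendsto_const_nhds.mul ((h1 j).sub tendsto_const_nhds))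
    have e : ∀ s, g i s = ∑ j, Aᵀ i j * ((∑ k, A j k * x s k ^ (K + 3)) - y j) := by
      intro s; simp [hgdef, Matrix.mulVec, dotProduct]
    have e2 : ginf i = ∑ j, Aᵀ i j * ((∑ k, A j k * xinf k) - y j) := by
      simp [hginfdef, Matrix.mulVec, dotProduct]
    rw [e2]
    exact h2.congr (fun s => (e s).symm)
  -- Claim A : on the support of xinf the limiting gradient vanishes
  have hA : ∀ i, 0 < xinf i → ginf i = 0 := by
    intro i hi
    have hξi : 0 < ξ i := Real.rpow_pos_of_pos hi _
    have hfv : Tendsto (fun t => -(g i t * x t i ^ (K + 2))) atTop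
        (𝓝 (-(ginf i * ξ i ^ (K + 2)))) :=
      ((hglim i).mul ((hxlim i).pow (K + 2))).neg
    have hv := deriv_limit_zero (fun t ht => hflow' i t ht) (hxlim i) hfv
    have hp : ξ i ^ (K + 2) ≠ 0 := (pow_pos hξi _).ne'
    have := neg_eq_zero.1 hv
    rcases mul_eq_zero.1 this with h | h
    · exact h
    · exact absurd h hp
  -- Claim B : off the support, the limiting gradient is nonnegative
  have hB : ∀ i, xinf i = 0 → 0 ≤ ginf i := by
    intro i hi
    by_contra hneg
    push_neg at hneg
    have hev : ∀ᶠ t in atTop, g i t < 0 := (hglim i).eventually (eventually_lt_nhds hneg)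
    obtain ⟨t₁, ht₁⟩ := (hev.and (eventually_ge_atTop (0:ℝ))).exists_forall_of_atTop
    have ht₁0 : 0 ≤ t₁ := (ht₁ t₁ le_rfl).2
    have hmono : MonotoneOn (fun t => x t i) (Set.Ici t₁) := by
      apply monotoneOn_of_deriv_nonneg (convex_Ici t₁)
      · exact fun s hs => (hxc i s (le_trans ht₁0 hs)).continuousWithinAt
      · rw [interior_Ici]
        exact fun s hs =>
          ((hflow' i s (le_trans ht₁0 (le_of_lt hs))).differentiableAt).differentiableWithinAt
      · rw [interior_Ici]
        intro s hs
        have hs0 : 0 ≤ s := le_trans ht₁0 hs.le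
        rw [(hflow' i s hs0).deriv]
        have hg0 : g i s < 0 := (ht₁ s hs.le).1
        have hx0 : 0 < x s i := hpos i s hs0
        have := pow_pos hx0 (K + 2)
        nlinarith
    have hlb : ∀ t, t₁ ≤ t → x t₁ i ^ (K + 3) ≤ x t i ^ (K + 3) := by
      intro t ht
      exact pow_le_pow_left₀ (hpos i t₁ ht₁0).le
        (hmono Set.self_mem_Ici (Set.mem_Ici.2 ht) ht) _
    have h0 : x t₁ i ^ (K + 3) ≤ xinf i :=
      ge_of_tendsto (hulim i) ((eventually_ge_atTop t₁).mono hlb)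
    have := pow_pos (hpos i t₁ ht₁0) (K + 3)
    rw [hi] at h0
    linarith
  -- Claim C : xinf is an NNLS solution
  have hCmem : xinf ∈ nnlsSet A y := by
    refine ⟨hxinf0, ?_⟩
    intro w hw
    have hbj : ∀ j, A.mulVec w j - y j =
        (A.mulVec xinf j - y j) + A.mulVec (fun i => w i - xinf i) j := by
      intro j
      simp only [Matrix.mulVec, dotProduct]
      have e : ∀ k ∈ Finset.univ, A j k * (w k - xinf k)
          = A j k * w k - A j k * xinf k := by intros; ring
      rw [Finset.sum_congr rfl e, Finset.sum_sub_distrib]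
      ring
    have hswap : ∑ j, (A.mulVec xinf j - y j) * A.mulVec (fun i => w i - xinf i) j
        = ∑ i, (w i - xinf i) * ginf i := by
      have hgr : ∀ i, ginf i = ∑ j, A j i * (A.mulVec xinf j - y j) := by
        intro i
        simp [hginfdef, Matrix.mulVec, dotProduct, Matrix.transpose_apply]
      calc ∑ j, (A.mulVec xinf j - y j) * A.mulVec (fun i => w i - xinf i) j
          = ∑ j, ∑ i, (w i - xinf i) * (A j i * (A.mulVec xinf j - y j)) := by
            apply Finset.sum_congr rfl
            intro j _
            simp only [Matrix.mulVec, dotProduct]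
            rw [Finset.mul_sum]
            apply Finset.sum_congr rfl
            intro i _
            ring
        _ = ∑ i, ∑ j, (w i - xinf i) * (A j i * (A.mulVec xinf j - y j)) :=
            Finset.sum_comm
        _ = ∑ i, (w i - xinf i) * ginf i := by
            apply Finset.sum_congr rfl
            intro i _
            rw [hgr i, Finset.mul_sum]
    have hexp : ∑ j, (A.mulVec w j - y j)^2 = ∑ j, (A.mulVec xinf j - y j)^2
        + 2 * (∑ i, (w i - xinf i) * ginf i)
        + ∑ j, (A.mulVec (fun i => w i - xinf i) j)^2 := by
      have e1 : ∀ j ∈ Finset.univ, (A.mulVec w j - y j)^2 =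
          (A.mulVec xinf j - y j)^2
          + 2 * ((A.mulVec xinf j - y j) * A.mulVec (fun i => w i - xinf i) j)
          + (A.mulVec (fun i => w i - xinf i) j)^2 := by
        intro j _; rw [hbj j]; ring
      rw [Finset.sum_congr rfl e1, Finset.sum_add_distrib, Finset.sum_add_distrib,
        ← Finset.mul_sum, hswap]
    have hterm : ∀ i ∈ Finset.univ, (0:ℝ) ≤ (w i - xinf i) * ginf i := by
      intro i _
      rcases (hxinf0 i).eq_or_lt with h | h
      · have h1 : 0 ≤ w i - xinf i := by rw [← h]; simpa using hw i
        exact mul_nonneg h1 (hB i h.symm)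
      · rw [hA i h]; simp
    have hs1 : 0 ≤ ∑ i, (w i - xinf i) * ginf i := Finset.sum_nonneg hterm
    have hs2 : 0 ≤ ∑ j, (A.mulVec (fun i => w i - xinf i) j)^2 :=
      Finset.sum_nonneg fun j _ => sq_nonneg _
    linarith [hexp]
  -- Claim D : A xinf = A z
  have hAeq : ∀ j, A.mulVec xinf j = A.mulVec z j := by
    set m : Fin N → ℝ := fun i => (xinf i + z i)/2 with hmdef
    have hm : ∀ i, 0 ≤ m i := by
      intro i
      have := hxinf0 i
      have := hz.1 i
      rw [hmdef]
      dsimp only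
      linarith
    have hmid : ∀ j, A.mulVec m j - y j
        = ((A.mulVec xinf j - y j) + (A.mulVec z j - y j))/2 := by
      intro j
      simp only [hmdef, Matrix.mulVec, dotProduct]
      have e : ∀ k ∈ Finset.univ, A j k * ((xinf k + z k)/2)
          = (A j k * xinf k)/2 + (A j k * z k)/2 := by intros; ring
      rw [Finset.sum_congr rfl e, Finset.sum_add_distrib, ← Finset.sum_div, ← Finset.sum_div]
      ring
    have hzF := hz.2 xinf hxinf0
    have hxF := hCmem.2 z hz.1
    have hmF := hCmem.2 m hm
    have hdiff : ∑ j, (A.mulVec xinf j - A.mulVec z j)^2 ≤ 0 := by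
      have e2 : ∀ j ∈ Finset.univ, (A.mulVec xinf j - A.mulVec z j)^2
          = 2*(A.mulVec xinf j - y j)^2 + 2*(A.mulVec z j - y j)^2
            - 4*(A.mulVec m j - y j)^2 := by
        intro j _
        rw [show A.mulVec xinf j - A.mulVec z j
          = (A.mulVec xinf j - y j) - (A.mulVec z j - y j) by ring]
        rw [show (4:ℝ)*(A.mulVec m j - y j)^2
          = 4*(((A.mulVec xinf j - y j) + (A.mulVec z j - y j))/2)^2 by rw [hmid j]]
        ring
      rw [Finset.sum_congr rfl e2]
      have d1 : ∀ j ∈ Finset.univ, 2*(A.mulVec xinf j - y j)^2 + 2*(A.mulVec z j - y j)^2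
          - 4*(A.mulVec m j - y j)^2
          = (2*(A.mulVec xinf j - y j)^2 + 2*(A.mulVec z j - y j)^2)
            - 4*(A.mulVec m j - y j)^2 := by intros; ring
      rw [Finset.sum_congr rfl d1, Finset.sum_sub_distrib, Finset.sum_add_distrib,
        ← Finset.mul_sum, ← Finset.mul_sum, ← Finset.mul_sum]
      linarith
    have hsum0 : ∑ j, (A.mulVec xinf j - A.mulVec z j)^2 = 0 :=
      le_antisymm hdiff (Finset.sum_nonneg fun j _ => sq_nonneg _)
    intro j
    have h := (Finset.sum_eq_zero_iff_of_nonneg (fun j _ => sq_nonneg _)).1 hsum0 j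
      (Finset.mem_univ j)
    have h2 := (pow_eq_zero_iff (by norm_num : (2:ℕ) ≠ 0)).mp h
    linarith [h2]
  -- the conserved quantity
  set hfun : ℝ → ℝ := fun t => ∑ i, (xinf i - z i) * (x t i ^ (K+1))⁻¹ with hfdef
  have hder : ∀ t, 0 ≤ t → HasDerivAt hfun 0 t := by
    intro t ht
    have hsum : HasDerivAt hfun (∑ i, (xinf i - z i) * (((K:ℝ)+1) * g i t)) t := by
      rw [hfdef]
      apply HasDerivAt.fun_sum
      intro i _
      exact HasDerivAt.const_mul (xinf i - z i)
        (inv_pow_hasDerivAt (hflow' i t ht) (hpos i t ht).ne')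
    have hgr : ∀ i, g i t = ∑ j, A j i * (A.mulVec (fun j' => x t j' ^ (K + 3)) j - y j) := by
      intro i
      simp [hgdef, Matrix.mulVec, dotProduct, Matrix.transpose_apply]
    have hzsum : ∀ j, ∑ i, A j i * (xinf i - z i) = 0 := by
      intro j
      have h4 : ∑ i, A j i * xinf i = ∑ i, A j i * z i := by
        have := hAeq j
        simpa [Matrix.mulVec, dotProduct] using this
      have e3 : ∀ i ∈ Finset.univ, A j i * (xinf i - z i)
          = A j i * xinf i - A j i * z i := by intros; ring
      rw [Finset.sum_congr rfl e3, Finset.sum_sub_distrib, h4]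
      ring
    have hzero : ∑ i, (xinf i - z i) * (((K:ℝ)+1) * g i t) = 0 := by
      calc ∑ i, (xinf i - z i) * (((K:ℝ)+1) * g i t)
          = ∑ i, ∑ j, ((K:ℝ)+1) * ((A.mulVec (fun j' => x t j' ^ (K + 3)) j - y j)
              * (A j i * (xinf i - z i))) := by
            apply Finset.sum_congr rfl
            intro i _
            rw [hgr i, Finset.mul_sum, Finset.mul_sum]
            apply Finset.sum_congr rfl
            intros; ring
        _ = ∑ j, ∑ i, ((K:ℝ)+1) * ((A.mulVec (fun j' => x t j' ^ (K + 3)) j - y j)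
              * (A j i * (xinf i - z i))) := Finset.sum_comm
        _ = 0 := by
            apply Finset.sum_eq_zero
            intro j _
            rw [← Finset.mul_sum, ← Finset.mul_sum, hzsum j]
            ring
    rw [← hzero]
    exact hsum
  have hconst : ∀ T, 0 ≤ T → hfun T = hfun 0 := by
    intro T hT
    exact constant_of_has_deriv_right_zero (a := 0) (b := T)
      (fun s hs => (hder s hs.1).continuousAt.continuousWithinAt)
      (fun s hs => (hder s hs.1).hasDerivWithinAt) T (Set.right_mem_Icc.2 hT)
  set B := ∑ i, xinf i with hBdef
  have hQz : ∑ i, z i = Qp := by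
    rw [← hzQ]
    apply Finset.sum_congr rfl
    intro i _
    exact (abs_of_nonneg (hz.1 i)).symm
  have hh0 : hfun 0 = (α ^ (K+1))⁻¹ * (B - Qp) := by
    rw [hfdef, hBdef, ← hQz]
    simp only [hinit]
    have e : ∀ i ∈ Finset.univ, (xinf i - z i) * (α ^ (K+1))⁻¹
        = (α^(K+1))⁻¹ * xinf i - (α^(K+1))⁻¹ * z i := by intros; ring
    rw [Finset.sum_congr rfl e, Finset.sum_sub_distrib, ← Finset.mul_sum, ← Finset.mul_sum]
    ring
  set P := ∑ i, xinf i * ((ξ i) ^ (K+1))⁻¹ with hPdef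
  have hWlim : Tendsto (fun T => ∑ i, xinf i * (x T i ^ (K+1))⁻¹) atTop (𝓝 P) := by
    rw [hPdef]
    apply tendsto_finset_sum
    intro i _
    rcases (hxinf0 i).eq_or_lt with h | h
    · have e : (fun T => xinf i * (x T i ^ (K+1))⁻¹) = fun _ => (0:ℝ) := by
        funext T; rw [← h]; ring
      rw [e, show xinf i * ((ξ i) ^ (K+1))⁻¹ = 0 by rw [← h]; ring]
      exact tendsto_const_nhds
    · have hξi : 0 < ξ i := Real.rpow_pos_of_pos h _
      exact tendsto_const_nhds.mul (((hxlim i).pow (K+1)).inv₀ (pow_pos hξi _).ne')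
  have hhW : ∀ᶠ T in atTop, hfun 0 ≤ ∑ i, xinf i * (x T i ^ (K+1))⁻¹ := by
    filter_upwards [eventually_ge_atTop (0:ℝ)] with T hT
    rw [← hconst T hT, hfdef]
    apply Finset.sum_le_sum
    intro i _
    have hxp := hpos i T hT
    have hinv : 0 ≤ (x T i ^ (K+1))⁻¹ := by positivity
    have hzi := hz.1 i
    nlinarith
  have hP : hfun 0 ≤ P := ge_of_tendsto hWlim hhW
  have hPb : P ≤ (N:ℝ) + B := by
    rw [hPdef, hBdef]
    have e : ∀ i ∈ Finset.univ, xinf i * ((ξ i) ^ (K+1))⁻¹ ≤ 1 + xinf i := by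
      intro i _
      rcases (hxinf0 i).eq_or_lt with h | h
      · rw [← h]; norm_num
      · have hξi : 0 < ξ i := Real.rpow_pos_of_pos h _
        have hx : xinf i = ξ i ^ (K+3) := (hξpow i).symm
        rw [hx]
        have e2 : ξ i ^ (K+3) * ((ξ i)^(K+1))⁻¹ = ξ i ^ 2 := by
          rw [show K+3 = (K+1)+2 by ring, pow_add]
          field_simp
        rw [e2]
        rcases le_or_gt (ξ i) 1 with h1 | h1
        · have h2 : ξ i ^ 2 ≤ 1 := pow_le_one₀ (hξ0 i) h1
          have h3 : (0:ℝ) ≤ ξ i ^ (K+3) := pow_nonneg (hξ0 i) _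
          linarith
        · have h2 : ξ i ^ 2 ≤ ξ i ^ (K+3) := pow_le_pow_right₀ h1.le (by omega)
          linarith
    calc ∑ i, xinf i * ((ξ i)^(K+1))⁻¹ ≤ ∑ i, (1 + xinf i) := Finset.sum_le_sum e
      _ = (N:ℝ) + ∑ i, xinf i := by
          rw [Finset.sum_add_distrib]
          simp [Finset.card_univ]
  have h1 : (α ^ (K+1))⁻¹ * (B - Qp) ≤ (N:ℝ) + B := by
    rw [← hh0]; exact hP.trans hPb
  have hαp : (0:ℝ) < α^(K+1) := pow_pos hα0 _
  have hstep : B - Qp ≤ α^(K+1) * ((N:ℝ) + B) := by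
    have h2 := mul_le_mul_of_nonneg_left h1 hαp.le
    calc B - Qp = α^(K+1) * ((α^(K+1))⁻¹ * (B - Qp)) := by field_simp
      _ ≤ α^(K+1) * ((N:ℝ) + B) := h2
  have hQp0 : 0 ≤ Qp := by
    rw [← hzQ]; exact Finset.sum_nonneg fun i _ => abs_nonneg _
  have hB0 : 0 ≤ B := Finset.sum_nonneg fun i _ => hxinf0 i
  set c := 2 * ε / (((K:ℝ)+3) * (Qp + (N:ℝ) + ε)) with hcdef
  have hden : 0 < ((K:ℝ)+3) * (Qp + (N:ℝ) + ε) := by positivity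
  have hc0 : 0 < c := by rw [hcdef]; positivity
  have hαc : α^(K+1) ≤ c := by
    have hα' : α ≤ c ^ ((1:ℝ)/((K:ℝ)+1)) := by
      rw [hcdef]
      have e1 : ((K + 3 : ℕ) : ℝ) = (K:ℝ) + 3 := by push_cast; ring
      have h := hα
      rw [e1, show (K:ℝ) + 3 - 2 = (K:ℝ)+1 by ring] at h
      exact h
    have h2 : α ^ (K+1) ≤ (c ^ ((1:ℝ)/((K:ℝ)+1))) ^ (K+1) :=
      pow_le_pow_left₀ hα0.le hα' _
    have h3 : (c ^ ((1:ℝ)/((K:ℝ)+1))) ^ (K+1) = c := by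
      rw [← Real.rpow_natCast (c ^ ((1:ℝ)/((K:ℝ)+1))) (K+1), ← Real.rpow_mul hc0.le]
      rw [show (1:ℝ)/((K:ℝ)+1) * ((K+1:ℕ):ℝ) = 1 by push_cast; field_simp]
      exact Real.rpow_one _
    rw [h3] at h2
    exact h2
  have hfinal : B - Qp ≤ c * ((N:ℝ) + B) :=
    hstep.trans (mul_le_mul_of_nonneg_right hαc (by positivity))
  have hcε : c * (Qp + (N:ℝ) + ε) ≤ ε := by
    rw [hcdef]
    rw [show 2 * ε / (((K:ℝ)+3) * (Qp + (N:ℝ) + ε)) * (Qp + (N:ℝ) + ε)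
      = 2 * ε / ((K:ℝ)+3) from by field_simp]
    rw [div_le_iff₀ (by positivity : (0:ℝ) < (K:ℝ)+3)]
    nlinarith [mul_nonneg hε.le (Nat.cast_nonneg K : (0:ℝ) ≤ (K:ℝ))]
  have hc1 : c ≤ 2/3 := by
    rw [hcdef, div_le_iff₀ hden]
    have hN0 : (0:ℝ) ≤ (N:ℝ) := Nat.cast_nonneg N
    have hK0 : (0:ℝ) ≤ (K:ℝ) := Nat.cast_nonneg K
    have expand : 2/3 * (((K:ℝ)+3) * (Qp + (N:ℝ) + ε))
        = 2/3*((K:ℝ)*Qp) + 2/3*((K:ℝ)*(N:ℝ)) + 2/3*((K:ℝ)*ε)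
          + 2*Qp + 2*(N:ℝ) + 2*ε := by ring
    have e1 := mul_nonneg hK0 hQp0
    have e2 := mul_nonneg hK0 hN0
    have e3 := mul_nonneg hK0 hε.le
    linarith [expand.ge, expand.le]
  have hgoalB : ∑ i, |xinf i| = B := by
    rw [hBdef]
    apply Finset.sum_congr rfl
    intro i _
    exact abs_of_nonneg (hxinf0 i)
  rw [hgoalB]
  have hkey : (B - Qp - ε) * (1 - c) ≤ 0 := by nlinarith [hfinal, hcε]
  nlinarith [hkey, hc1]

end
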